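/- Let P be the free abelian group on symbols X_β (β < ω₁) and Z_{δ,n} (δ ∈ S, n ∈ ω), and let Q ≤ P be the subgroup generated by the elements g_{δ,n} = ψ(n)Z_{δ,n+1} − Z_{δ,n} − Σ_{l<tₙ^δ} a_l^{δ,n} X_{η_δ(kₙ^δ+l)} (δ ∈ S, n ∈ ω). Then the homomorphism P → G_η̄ sending X_β ↦ x_β and Z_{δ,n} ↦ z_{δ,n} is surjective with kernel exactly Q; in other words, G_η̄ ≅ P/Q and the relations ψ(n)z_{δ,n+1} = z_{δ,n} + Σ_{l<tₙ^δ} a_l^{δ,n} x_{η_δ(kₙ^δ+l)} are the only relations satisfied by the generators of G_η̄. -/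

import Mathlib

set_option autoImplicit false
noncomputable section

open Ordinal Cardinal

/-- A ladder on a limit ordinal `δ`: a strictly increasing cofinal sequence of
successor ordinals below `δ`. -/
structure IsLadder (δ : Ordinal) (η : ℕ → Ordinal) : Prop where
  strictMono : StrictMono η
  isSucc : ∀ n : ℕ, ∃ α : Ordinal, η n = α + 1
  lt_delta : ∀ n : ℕ, η n < δ
  cofinal : ∀ β < δ, ∃ n : ℕ, β < η n

/-- Conditions (a) and (b) for `k` to witness that the ladder `η` is special. -/
def SpecialCond (η : ℕ → Ordinal) (k : ℕ → ℕ) : Prop :=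
  ∀ n : ℕ,
    (∀ i < k (n + 1) - k n, ∀ j < k (n + 1) - k n,
      η (k n + i) + Ordinal.omega0 = η (k n + j) + Ordinal.omega0) ∧
    η (k n) + Ordinal.omega0 < η (k (n + 1))

/-- A club (closed unbounded) subset of `ω₁`. -/
def IsClubBelowOmega1 (C : Set Ordinal) : Prop :=
  (∀ γ ∈ C, γ < ω₁) ∧
  (∀ α < ω₁, ∃ γ ∈ C, α < γ) ∧
  (∀ δ, δ < ω₁ → δ ≠ 0 → (∀ β < δ, ∃ γ ∈ C, β < γ ∧ γ < δ) → δ ∈ C)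

/-- A stationary subset of `ω₁`: one meeting every club. -/
def IsStationaryBelowOmega1 (T : Set Ordinal) : Prop :=
  ∀ C : Set Ordinal, IsClubBelowOmega1 C → (T ∩ C).Nonempty

/-- The standing hypotheses on the set `S`: a stationary, co-stationary subset of `ω₁`
consisting of limit ordinals of cofinality `ω` divisible by `ω²`. -/
structure GoodS (S : Set Ordinal) : Prop where
  stationary : IsStationaryBelowOmega1 S
  costationary : IsStationaryBelowOmega1 ({α : Ordinal | α < ω₁} \ S)
  lt_omega1 : ∀ δ ∈ S, δ < ω₁
  isLimit : ∀ δ ∈ S, Order.IsSuccLimit δ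
  cof_eq : ∀ δ ∈ S, Ordinal.cof δ = Cardinal.aleph0
  omega_sq_dvd : ∀ δ ∈ S, Ordinal.omega0 ^ 2 ∣ δ

/-- A special ladder system on `S`: for each `δ ∈ S` a special ladder `eta δ`
with witnessing sequence `kk δ`. -/
structure LadderSystem (S : Set Ordinal) where
  eta : Ordinal → ℕ → Ordinal
  kk : Ordinal → ℕ → ℕ
  ladder : ∀ δ ∈ S, IsLadder δ (eta δ)
  kk_pos : ∀ δ ∈ S, 0 < kk δ 0
  kk_mono : ∀ δ ∈ S, StrictMono (kk δ)
  special : ∀ δ ∈ S, SpecialCond (eta δ) (kk δ)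

/-- Equality of the ω-ranges of two special ladder systems: `rd(η̄) = rd(ν̄)`. -/
def rdEq (S : Set Ordinal) (L M : LadderSystem S) : Prop :=
  ∀ δ ∈ S, ∀ n : ℕ,
    L.eta δ (L.kk δ n) + Ordinal.omega0 = M.eta δ (M.kk δ n) + Ordinal.omega0

/-- Index type for the basis of the ambient `ℚ`-vector space `F`. -/
abbrev FIdx : Type 1 := Ordinal ⊕ (Ordinal × ℕ)

/-- The ambient `ℚ`-vector space `F`, with basis `x_β` (β an ordinal) and `y_{δ,n}`. -/
abbrev Fsp : Type 1 := FIdx →₀ ℚ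

/-- The basis vector `x_β`. -/
def xgen (β : Ordinal) : Fsp := Finsupp.single (Sum.inl β) 1

/-- The basis vector `y_{δ,n}`. -/
def ygen (δ : Ordinal) (n : ℕ) : Fsp := Finsupp.single (Sum.inr (δ, n)) 1

/-- The elements `z_{δ,n}`, defined by `z_{δ,0} = y_δ` and
`z_{δ,n+1} = ψ(n)⁻¹ (z_{δ,n} + Σ_{l<tₙ^δ} a_l^{δ,n} x_{η_δ(kₙ^δ+l)})`, equivalently
`ψ(n) z_{δ,n+1} = z_{δ,n} + Σ_{l<tₙ^δ} a_l^{δ,n} x_{η_δ(kₙ^δ+l)}`. -/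
def zgen (eta : Ordinal → ℕ → Ordinal) (kk : Ordinal → ℕ → ℕ)
    (a : Ordinal → ℕ → ℕ → ℤ) (ψ : ℕ → ℕ) (δ : Ordinal) : ℕ → Fsp
  | 0 => ygen δ 0
  | n + 1 => ((ψ n : ℚ))⁻¹ •
      (zgen eta kk a ψ δ n +
        ∑ l ∈ Finset.range (kk δ (n + 1) - kk δ n), a δ n l • xgen (eta δ (kk δ n + l)))

/-- All the data needed to build the group `G_η̄`: a special ladder system together with
the function `ψ` (everywhere nonzero) and the coefficients `a_l^{δ,n}` with
`gcd(a_l^{δ,n} : l < tₙ^δ) = 1`. -/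
structure GroupData (S : Set Ordinal) extends LadderSystem S where
  a : Ordinal → ℕ → ℕ → ℤ
  psi : ℕ → ℕ
  psi_ne : ∀ n : ℕ, psi n ≠ 0
  a_gcd : ∀ δ ∈ S, ∀ n : ℕ, (Finset.range (kk δ (n + 1) - kk δ n)).gcd (a δ n) = 1

/-- The group `G_η̄ ≤ (F,+)`, generated by the `x_β` (β < ω₁) and the `z_{δ,n}` (δ ∈ S). -/
def Ggrp (S : Set Ordinal) (D : GroupData S) : AddSubgroup Fsp :=
  AddSubgroup.closure
    ({f : Fsp | ∃ β < ω₁, f = xgen β} ∪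
     {f : Fsp | ∃ δ ∈ S, ∃ n : ℕ, f = zgen D.eta D.kk D.a D.psi δ n})

/-- The `ℚ`-subspace `V_α` spanned by the `x_β` (β < α+ω) and `y_{δ,n}` (δ ∈ S ∩ α). -/
def Vsp (S : Set Ordinal) (α : Ordinal) : Submodule ℚ Fsp :=
  Submodule.span ℚ
    ({f : Fsp | ∃ β < α + Ordinal.omega0, f = xgen β} ∪
     {f : Fsp | ∃ δ ∈ S, δ < α ∧ ∃ n : ℕ, f = ygen δ n})

/-- The pure closure of `H` in `G`: `{g ∈ G : m • g ∈ H for some nonzero integer m}`. -/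
def purify (G H : AddSubgroup Fsp) : AddSubgroup Fsp where
  carrier := {g : Fsp | g ∈ G ∧ ∃ m : ℤ, m ≠ 0 ∧ m • g ∈ H}
  zero_mem' := ⟨G.zero_mem, 1, one_ne_zero, by simpa using H.zero_mem⟩
  add_mem' := by
    rintro g₁ g₂ ⟨hg₁, m₁, hm₁, h₁⟩ ⟨hg₂, m₂, hm₂, h₂⟩
    refine ⟨G.add_mem hg₁ hg₂, m₁ * m₂, mul_ne_zero hm₁ hm₂, ?_⟩
    rw [smul_add]
    exact H.add_mem (by rw [mul_comm, mul_smul]; exact H.zsmul_mem h₁ _)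
      (by rw [mul_smul]; exact H.zsmul_mem h₂ _)
  neg_mem' := by
    rintro g ⟨hg, m, hm, h⟩
    exact ⟨G.neg_mem hg, m, hm, by simpa using H.neg_mem h⟩

/-- The canonical filtration `G_η̄^α`: the pure closure in `G_η̄` of `G_η̄ ∩ V_α`. -/
def Gfil (S : Set Ordinal) (D : GroupData S) (α : Ordinal) : AddSubgroup Fsp :=
  purify (Ggrp S D) ((Vsp S α).toAddSubgroup ⊓ Ggrp S D)

/-- `H` is a direct summand of `G` (both viewed as subgroups of the ambient group). -/
def IsDirectSummandIn (H G : AddSubgroup Fsp) : Prop :=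
  H ≤ G ∧ ∃ K : AddSubgroup Fsp, K ≤ G ∧ H ⊓ K = ⊥ ∧ H ⊔ K = G


/-- The free abelian group `P` on the symbols `X_β` (β < ω₁) and `Z_{δ,n}` (δ ∈ S, n ∈ ω). -/
abbrev Pfree (S : Set Ordinal) : Type 1 :=
  ({β : Ordinal // β < ω₁} ⊕ ({δ : Ordinal // δ ∈ S} × ℕ)) →₀ ℤ

/-- The generator `X_β` of `P`. -/
def Xsym (S : Set Ordinal) (β : {β : Ordinal // β < ω₁}) : Pfree S :=
  Finsupp.single (Sum.inl β) 1

/-- The generator `Z_{δ,n}` of `P`. -/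
def Zsym (S : Set Ordinal) (δ : {δ : Ordinal // δ ∈ S}) (n : ℕ) : Pfree S :=
  Finsupp.single (Sum.inr (δ, n)) 1

/-- The homomorphism `P → F` sending `X_β ↦ x_β` and `Z_{δ,n} ↦ z_{δ,n}`. -/
def Pmap (S : Set Ordinal) (D : GroupData S) : Pfree S →ₗ[ℤ] Fsp :=
  Finsupp.linearCombination ℤ
    (Sum.elim (fun β => xgen β.1) (fun p => zgen D.eta D.kk D.a D.psi p.1.1 p.2))


section Aux18

variable (S : Set Ordinal)

lemma xgen_inr (β : Ordinal) (p : Ordinal × ℕ) : xgen β (Sum.inr p) = 0 :=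
  Finsupp.single_eq_of_ne (by simp)

lemma zgen_inr (E : Ordinal → ℕ → Ordinal) (K : Ordinal → ℕ → ℕ)
    (A : Ordinal → ℕ → ℕ → ℤ) (ψ : ℕ → ℕ) (δ : Ordinal) (p : Ordinal × ℕ) :
    ∀ n : ℕ, zgen E K A ψ δ n (Sum.inr p) =
      if p = (δ, 0) then (∏ i ∈ Finset.range n, (ψ i : ℚ))⁻¹ else 0
  | 0 => by
      simp only [zgen, ygen, Finsupp.single_apply, Finset.range_zero, Finset.prod_empty, inv_one]
      simp [eq_comm]
  | (n+1) => by
      rw [zgen, Finsupp.smul_apply, Finsupp.add_apply, Finsupp.finset_sum_apply,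
        zgen_inr E K A ψ δ p n]
      have hx : ∀ l ∈ Finset.range (K δ (n+1) - K δ n),
          (A δ n l • xgen (E δ (K δ n + l))) (Sum.inr p) = 0 := by
        intro l _
        rw [Finsupp.smul_apply, xgen_inr]
        simp
      rw [Finset.sum_eq_zero hx]
      by_cases hp : p = (δ, 0)
      · simp only [hp, if_true, Finset.prod_range_succ, mul_inv, add_zero, _root_.smul_eq_mul]
        ring
      · simp [hp]

lemma Pmap_X (D : GroupData S) (β : {β : Ordinal // β < ω₁}) :
    Pmap S D (Xsym S β) = xgen β.1 := by
  simp [Pmap, Xsym, Finsupp.linearCombination_single]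

lemma Pmap_Z (D : GroupData S) (d : {δ : Ordinal // δ ∈ S}) (n : ℕ) :
    Pmap S D (Zsym S d n) = zgen D.eta D.kk D.a D.psi d.1 n := by
  simp [Pmap, Zsym, Finsupp.linearCombination_single]

lemma Pmap_apply (D : GroupData S) (q : Pfree S) (j : FIdx) :
    Pmap S D q j = ∑ i ∈ q.support, (q i : ℚ) *
      (Sum.elim (fun β => xgen β.1)
        (fun p => zgen D.eta D.kk D.a D.psi p.1.1 p.2) i) j := by
  rw [Pmap, Finsupp.linearCombination_apply, Finsupp.sum, Finsupp.finset_sum_apply]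
  exact Finset.sum_congr rfl fun i _ => by rw [Finsupp.smul_apply, zsmul_eq_mul]

/-- The set of defining relations. -/
def relSet (hS : GoodS S) (D : GroupData S) : Set (Pfree S) :=
  {r : Pfree S | ∃ δ : Ordinal, ∃ hδ : δ ∈ S, ∃ n : ℕ, r =
    (D.psi n : ℤ) • Zsym S ⟨δ, hδ⟩ (n + 1) - Zsym S ⟨δ, hδ⟩ n -
      ∑ l ∈ Finset.range (D.kk δ (n + 1) - D.kk δ n),
        D.a δ n l • Xsym S ⟨D.eta δ (D.kk δ n + l),
          lt_trans ((D.ladder δ hδ).lt_delta (D.kk δ n + l)) (hS.lt_omega1 δ hδ)⟩}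

lemma psi_zsmul (D : GroupData S) (δ : Ordinal) (n : ℕ) :
    (D.psi n : ℤ) • zgen D.eta D.kk D.a D.psi δ (n + 1) =
      zgen D.eta D.kk D.a D.psi δ n +
        ∑ l ∈ Finset.range (D.kk δ (n+1) - D.kk δ n),
          D.a δ n l • xgen (D.eta δ (D.kk δ n + l)) := by
  rw [zgen, ← Int.cast_smul_eq_zsmul ℚ, smul_smul, Int.cast_natCast,
    mul_inv_cancel₀ (by exact_mod_cast D.psi_ne n), one_smul]

lemma Pmap_rel (hS : GoodS S) (D : GroupData S) :
    ∀ r ∈ relSet S hS D, Pmap S D r = 0 := by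
  rintro r ⟨δ, hδ, n, rfl⟩
  rw [map_sub, map_sub, map_zsmul, map_sum, Pmap_Z, Pmap_Z]
  have hsum : ∀ l ∈ Finset.range (D.kk δ (n + 1) - D.kk δ n),
      Pmap S D (D.a δ n l • Xsym S ⟨D.eta δ (D.kk δ n + l),
          lt_trans ((D.ladder δ hδ).lt_delta (D.kk δ n + l)) (hS.lt_omega1 δ hδ)⟩) =
        D.a δ n l • xgen (D.eta δ (D.kk δ n + l)) := by
    intro l _
    rw [map_zsmul, Pmap_X]
  rw [Finset.sum_congr rfl hsum, psi_zsmul]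
  abel

lemma push (hS : GoodS S) (D : GroupData S) (d : {δ : Ordinal // δ ∈ S}) (n : ℕ) :
    ∀ m, n ≤ m → ∃ c : ℤ, c ≠ 0 ∧ ∃ v : Pfree S, (∀ p, v (Sum.inr p) = 0) ∧
      Zsym S d n - c • Zsym S d m - v ∈ AddSubgroup.closure (relSet S hS D) := by
  refine Nat.le_induction ⟨1, one_ne_zero, 0, fun p => rfl, by simpa using (AddSubgroup.closure (relSet S hS D)).zero_mem⟩ ?_
  rintro m hnm ⟨c, hc, v, hv, hQ⟩
  set Q := AddSubgroup.closure (relSet S hS D) with hQdef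
  set w : Pfree S := ∑ l ∈ Finset.range (D.kk d.1 (m + 1) - D.kk d.1 m),
      D.a d.1 m l • Xsym S ⟨D.eta d.1 (D.kk d.1 m + l),
        lt_trans ((D.ladder d.1 d.2).lt_delta (D.kk d.1 m + l)) (hS.lt_omega1 d.1 d.2)⟩
    with hw
  have hrel : (D.psi m : ℤ) • Zsym S d (m + 1) - Zsym S d m - w ∈ Q :=
    AddSubgroup.subset_closure ⟨d.1, d.2, m, rfl⟩
  refine ⟨c * D.psi m, mul_ne_zero hc (by exact_mod_cast D.psi_ne m), v - c • w, ?_, ?_⟩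
  · intro p
    have hwp : w (Sum.inr p) = 0 := by
      rw [hw, Finsupp.finset_sum_apply]
      refine Finset.sum_eq_zero fun l _ => ?_
      rw [Finsupp.smul_apply, Xsym, Finsupp.single_eq_of_ne (by simp)]
      simp
    simp [Finsupp.sub_apply, Finsupp.smul_apply, hv p, hwp]
  · have h2 := Q.sub_mem hQ (Q.zsmul_mem hrel c)
    have heq : Zsym S d n - (c * (D.psi m : ℤ)) • Zsym S d (m + 1) - (v - c • w) =
        Zsym S d n - c • Zsym S d m - v -
          c • ((D.psi m : ℤ) • Zsym S d (m + 1) - Zsym S d m - w) := by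
      module
    rw [heq]
    exact h2

lemma prod_psi_ne (D : GroupData S) (N : ℕ) :
    (∏ i ∈ Finset.range N, (D.psi i : ℚ)) ≠ 0 :=
  Finset.prod_ne_zero_iff.mpr fun i _ => Nat.cast_ne_zero.mpr (D.psi_ne i)

lemma w_eq_zero (D : GroupData S) (w : Pfree S) (N : ℕ)
    (h0 : Pmap S D w = 0)
    (hcond : ∀ d m, w (Sum.inr (d, m)) ≠ 0 → m = N) : w = 0 := by
  have hprod := prod_psi_ne S D N
  have hinr : ∀ p : {δ : Ordinal // δ ∈ S} × ℕ, w (Sum.inr p) = 0 := by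
    rintro ⟨d, m⟩
    by_contra hne
    have hmN := hcond d m hne
    subst hmN
    have hc := DFunLike.congr_fun h0 (Sum.inr (d.1, 0))
    rw [Pmap_apply] at hc
    simp only [Finsupp.coe_zero, Pi.zero_apply] at hc
    rw [Finset.sum_eq_single (Sum.inr (d, m))] at hc
    · rw [Sum.elim_inr, zgen_inr, if_pos rfl] at hc
      exact hne (by exact_mod_cast (mul_eq_zero.mp hc).resolve_right (inv_ne_zero hprod))
    · intro b hb hbne
      cases b with
      | inl β => rw [Sum.elim_inl, xgen_inr, mul_zero]
      | inr p =>
        obtain ⟨d', m'⟩ := p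
        have hm' : m' = m := hcond d' m' (Finsupp.mem_support_iff.mp hb)
        subst hm'
        rw [Sum.elim_inr, zgen_inr, if_neg, mul_zero]
        intro hpe
        have hdd : d' = d := Subtype.ext (congrArg Prod.fst hpe).symm
        exact hbne (congrArg (fun x => Sum.inr (x, m')) hdd)
    · intro hnotmem
      rw [Finsupp.notMem_support_iff.mp hnotmem]
      simp
  have hinl : ∀ b : {β : Ordinal // β < ω₁}, w (Sum.inl b) = 0 := by
    intro b
    have hc := DFunLike.congr_fun h0 (Sum.inl b.1)
    rw [Pmap_apply] at hc
    simp only [Finsupp.coe_zero, Pi.zero_apply] at hc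
    rw [Finset.sum_eq_single (Sum.inl b)] at hc
    · rw [Sum.elim_inl, xgen, Finsupp.single_eq_same, mul_one] at hc
      exact_mod_cast hc
    · intro i hi hine
      cases i with
      | inr p => exact absurd (hinr p) (Finsupp.mem_support_iff.mp hi)
      | inl γ =>
        rw [Sum.elim_inl, xgen, Finsupp.single_apply, if_neg, mul_zero]
        intro he
        exact hine (congrArg Sum.inl (Subtype.ext (Sum.inl.inj he)))
    · intro h
      rw [Finsupp.notMem_support_iff.mp h]
      simp
  ext i
  cases i with
  | inl b => simpa using hinl b
  | inr p => simpa using hinr p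

lemma mem_closure_of_map_eq_zero (hS : GoodS S) (D : GroupData S) (q : Pfree S)
    (h0 : Pmap S D q = 0) : q ∈ AddSubgroup.closure (relSet S hS D) := by
  set Q := AddSubgroup.closure (relSet S hS D) with hQdef
  set N := q.support.sup (Sum.elim (fun _ => 0) (fun p => p.2)) with hN
  have key : ∀ i, ∃ w : Pfree S, (Finsupp.single i (q i) - w ∈ Q) ∧
      ∀ d m, w (Sum.inr (d, m)) ≠ 0 → m = N := by
    intro i
    by_cases hqi : q i = 0
    · refine ⟨0, by simpa [hqi] using Q.zero_mem, ?_⟩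
      intro d m h
      simp at h
    cases i with
    | inl β =>
      refine ⟨Finsupp.single (Sum.inl β) (q (Sum.inl β)), by simpa using Q.zero_mem, ?_⟩
      intro d m h
      rw [Finsupp.single_eq_of_ne (by simp)] at h
      exact absurd rfl h
    | inr p =>
      obtain ⟨d, m⟩ := p
      have hmN : m ≤ N := by
        have hmem : Sum.inr (d, m) ∈ q.support := Finsupp.mem_support_iff.mpr hqi
        have := Finset.le_sup (f := Sum.elim (fun _ => (0:ℕ)) (fun p => p.2)) hmem
        simpa using this
      obtain ⟨c, hc, v, hv, hQv⟩ := push S hS D d m N hmN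
      refine ⟨q (Sum.inr (d, m)) • (c • Zsym S d N + v), ?_, ?_⟩
      · have hmem := Q.zsmul_mem hQv (q (Sum.inr (d, m)))
        have hsingle : Finsupp.single (Sum.inr (d, m)) (q (Sum.inr (d, m))) =
            q (Sum.inr (d, m)) • Zsym S d m := by
          simp [Zsym, Finsupp.smul_single]
        have heq : Finsupp.single (Sum.inr (d, m)) (q (Sum.inr (d, m))) -
            q (Sum.inr (d, m)) • (c • Zsym S d N + v) =
            q (Sum.inr (d, m)) • (Zsym S d m - c • Zsym S d N - v) := by
          rw [hsingle]
          module
        rw [heq]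
        exact hmem
      · intro d' m' h
        by_contra hm
        rw [Finsupp.smul_apply, Finsupp.add_apply, Finsupp.smul_apply, hv, Zsym,
          Finsupp.single_apply] at h
        have hne : (Sum.inr (d, N) : {β : Ordinal // β < ω₁} ⊕ ({δ : Ordinal // δ ∈ S} × ℕ)) ≠
            Sum.inr (d', m') := by
          intro he
          cases he
          exact hm rfl
        rw [if_neg hne] at h
        simp at h
  choose wf hw1 hw2 using key
  have hqsum : ∑ i ∈ q.support, Finsupp.single i (q i) = q := Finsupp.sum_single q
  set wt := ∑ i ∈ q.support, wf i with hwt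
  have hsub : q - wt ∈ Q := by
    have heq : q - wt = ∑ i ∈ q.support, (Finsupp.single i (q i) - wf i) := by
      rw [Finset.sum_sub_distrib, hqsum]
    rw [heq]
    exact AddSubgroup.sum_mem Q fun i _ => hw1 i
  have hker : ∀ r ∈ Q, Pmap S D r = 0 := by
    have hle : Q ≤ (LinearMap.ker (Pmap S D)).toAddSubgroup :=
      (AddSubgroup.closure_le _).mpr fun r hr => by
        simp only [SetLike.mem_coe, Submodule.mem_toAddSubgroup, LinearMap.mem_ker]
        exact Pmap_rel S hS D r hr
    intro r hr
    simpa [LinearMap.mem_ker] using hle hr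
  have h0' : Pmap S D wt = 0 := by
    have := hker _ hsub
    rw [map_sub, h0, _root_.zero_sub, neg_eq_zero] at this
    exact this
  have hcond : ∀ d m, wt (Sum.inr (d, m)) ≠ 0 → m = N := by
    intro d m h
    rw [hwt, Finsupp.finset_sum_apply] at h
    obtain ⟨i, _, hne⟩ := Finset.exists_ne_zero_of_sum_ne_zero h
    exact hw2 i d m hne
  have hwt0 : wt = 0 := w_eq_zero S D wt N h0' hcond
  rw [hwt0, _root_.sub_zero] at hsub
  exact hsub

end Aux18

theorem statement18 (S : Set Ordinal) (hS : GoodS S) (D : GroupData S) :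
    (∀ β : {β : Ordinal // β < ω₁}, Pmap S D (Xsym S β) = xgen β.1) ∧
    (∀ (δ : {δ : Ordinal // δ ∈ S}) (n : ℕ),
      Pmap S D (Zsym S δ n) = zgen D.eta D.kk D.a D.psi δ.1 n) ∧
    (∀ q : Pfree S, Pmap S D q ∈ Ggrp S D) ∧
    (∀ g ∈ Ggrp S D, ∃ q : Pfree S, Pmap S D q = g) ∧
    (∀ q : Pfree S, (Pmap S D q = 0 ↔ q ∈ AddSubgroup.closure
      {r : Pfree S | ∃ δ : Ordinal, ∃ hδ : δ ∈ S, ∃ n : ℕ, r =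
        (D.psi n : ℤ) • Zsym S ⟨δ, hδ⟩ (n + 1) - Zsym S ⟨δ, hδ⟩ n -
          ∑ l ∈ Finset.range (D.kk δ (n + 1) - D.kk δ n),
            D.a δ n l • Xsym S ⟨D.eta δ (D.kk δ n + l),
              lt_trans ((D.ladder δ hδ).lt_delta (D.kk δ n + l)) (hS.lt_omega1 δ hδ)⟩})) := by
  refine ⟨Pmap_X S D, Pmap_Z S D, ?_, ?_, ?_⟩
  · intro q
    rw [Pmap, Finsupp.linearCombination_apply, Finsupp.sum]
    refine AddSubgroup.sum_mem _ fun i _ =>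
      AddSubgroup.zsmul_mem _ (AddSubgroup.subset_closure ?_) _
    cases i with
    | inl β => exact Or.inl ⟨β.1, β.2, rfl⟩
    | inr p => exact Or.inr ⟨p.1.1, p.1.2, p.2, rfl⟩
  · intro g hg
    have hle : Ggrp S D ≤ AddMonoidHom.range (Pmap S D).toAddMonoidHom := by
      rw [Ggrp]
      refine (AddSubgroup.closure_le _).mpr ?_
      rintro f (⟨β, hβ, rfl⟩ | ⟨δ, hδ, n, rfl⟩)
      · exact ⟨Xsym S ⟨β, hβ⟩, Pmap_X S D ⟨β, hβ⟩⟩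
      · exact ⟨Zsym S ⟨δ, hδ⟩ n, Pmap_Z S D ⟨δ, hδ⟩ n⟩
    exact hle hg
  · intro q
    constructor
    · exact mem_closure_of_map_eq_zero S hS D q
    · intro hq
      have hle : AddSubgroup.closure (relSet S hS D) ≤
          (LinearMap.ker (Pmap S D)).toAddSubgroup :=
        (AddSubgroup.closure_le _).mpr fun r hr => by
          simp only [SetLike.mem_coe, Submodule.mem_toAddSubgroup, LinearMap.mem_ker]
          exact Pmap_rel S hS D r hr
      have := hle hq
      simpa [LinearMap.mem_ker] using this

end
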